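/- For every matrix power series k(z) = Σ_{j=0}^∞ K_j z^j with real s×s matrix coefficients satisfying Σ_{j=0}^∞ j‖K_j‖ < ∞, there exists a decomposition k(z) = k(1) + (1 − z) k*(z), where k*(z) = Σ_{j=0}^∞ K*_j z^j with K*_j = −Σ_{i=j+1}^∞ K_i, and the coefficients of k* are absolutely summable: Σ_{j=0}^∞ ‖K*_j‖ < ∞ (Beveridge–Nelson decomposition). -/

import Mathlib

/- Operator 2-norm of a real matrix (a matrix norm). -/
noncomputable def opNorm2 {m n : ℕ} (M : Matrix (Fin m) (Fin n) ℝ) : ℝ :=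
  ‖LinearMap.toContinuousLinearMap (Matrix.toEuclideanLin M)‖



open Matrix


lemma euclid_coord_le {n : ℕ} (x : EuclideanSpace ℝ (Fin n)) (b : Fin n) : |x b| ≤ ‖x‖ := by
  rw [EuclideanSpace.norm_eq]
  have h1 : |x b| = Real.sqrt (‖x b‖ ^ 2) := by
    rw [Real.sqrt_sq_eq_abs, Real.norm_eq_abs, abs_abs]
  rw [h1]
  exact Real.sqrt_le_sqrt (Finset.single_le_sum (f := fun i => ‖x i‖ ^ 2)
    (fun i _ => sq_nonneg _) (Finset.mem_univ b))

lemma toEuclideanLin_coord {m n : ℕ} (M : Matrix (Fin m) (Fin n) ℝ)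
    (v : EuclideanSpace ℝ (Fin n)) (a : Fin m) :
    (Matrix.toEuclideanLin M v) a = ∑ b, M a b * v b := by
  rw [Matrix.toEuclideanLin_apply, WithLp.ofLp_toLp]
  simp [Matrix.mulVec, dotProduct]

lemma entry_le_opNorm2 {m n : ℕ} (M : Matrix (Fin m) (Fin n) ℝ) (a : Fin m) (b : Fin n) :
    |M a b| ≤ opNorm2 M := by
  classical
  set L := LinearMap.toContinuousLinearMap (Matrix.toEuclideanLin M) with hL
  have hv : ‖(EuclideanSpace.single b (1:ℝ) : EuclideanSpace ℝ (Fin n))‖ = 1 := by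
    simp [EuclideanSpace.norm_single]
  have happ : (L (EuclideanSpace.single b 1)) a = M a b := by
    show (Matrix.toEuclideanLin M (EuclideanSpace.single b 1)) a = M a b
    rw [toEuclideanLin_coord]
    rw [EuclideanSpace.single]
    simp [WithLp.ofLp_toLp, Pi.single_apply]
  calc |M a b| = |(L (EuclideanSpace.single b 1)) a| := by rw [happ]
    _ ≤ ‖L (EuclideanSpace.single b 1)‖ := euclid_coord_le _ _
    _ ≤ ‖L‖ * ‖(EuclideanSpace.single b (1:ℝ) : EuclideanSpace ℝ (Fin n))‖ := L.le_opNorm _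
    _ = opNorm2 M := by rw [hv, mul_one, hL]; rfl

lemma opNorm2_le_sum {m n : ℕ} (M : Matrix (Fin m) (Fin n) ℝ) :
    opNorm2 M ≤ ∑ a, ∑ b, |M a b| := by
  rw [opNorm2]
  apply ContinuousLinearMap.opNorm_le_bound
  · positivity
  intro v
  rw [LinearMap.coe_toContinuousLinearMap']
  have hcoord : ∀ a, ‖(Matrix.toEuclideanLin M v) a‖ ≤ (∑ b, |M a b|) * ‖v‖ := by
    intro a
    rw [toEuclideanLin_coord, Real.norm_eq_abs]
    calc |∑ b, M a b * v b| ≤ ∑ b, |M a b * v b| := Finset.abs_sum_le_sum_abs _ _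
      _ ≤ ∑ b, |M a b| * ‖v‖ := by
          refine Finset.sum_le_sum fun b _ => ?_
          rw [abs_mul]
          exact mul_le_mul_of_nonneg_left (euclid_coord_le v b) (abs_nonneg _)
      _ = (∑ b, |M a b|) * ‖v‖ := by rw [Finset.sum_mul]
  have key : ‖Matrix.toEuclideanLin M v‖ ≤ ∑ a, (∑ b, |M a b|) * ‖v‖ := by
    rw [EuclideanSpace.norm_eq]
    have h1 : ∑ a, ‖(Matrix.toEuclideanLin M v) a‖ ^ 2
        ≤ (∑ a, (∑ b, |M a b|) * ‖v‖) ^ 2 := by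
      calc ∑ a, ‖(Matrix.toEuclideanLin M v) a‖ ^ 2
          ≤ ∑ a, ((∑ b, |M a b|) * ‖v‖) ^ 2 :=
            Finset.sum_le_sum fun a _ => by
              have := hcoord a
              nlinarith [norm_nonneg ((Matrix.toEuclideanLin M v) a)]
        _ ≤ (∑ a, (∑ b, |M a b|) * ‖v‖) ^ 2 :=
            Finset.sum_sq_le_sq_sum_of_nonneg fun a _ => by positivity
    calc Real.sqrt (∑ a, ‖(Matrix.toEuclideanLin M v) a‖ ^ 2)
        ≤ Real.sqrt ((∑ a, (∑ b, |M a b|) * ‖v‖) ^ 2) := Real.sqrt_le_sqrt h1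
      _ = ∑ a, (∑ b, |M a b|) * ‖v‖ := Real.sqrt_sq (by positivity)
  calc ‖Matrix.toEuclideanLin M v‖ ≤ ∑ a, (∑ b, |M a b|) * ‖v‖ := key
    _ = (∑ a, ∑ b, |M a b|) * ‖v‖ := by rw [Finset.sum_mul]



lemma summable_of_mul_nat (g : ℕ → ℝ) (hg : ∀ n, 0 ≤ g n)
    (h : Summable fun n : ℕ => (n : ℝ) * g n) : Summable g := by
  have h1 : Summable (fun n : ℕ => g (n + 1)) := by
    refine Summable.of_nonneg_of_le (fun n => hg _) (fun n => ?_) ((summable_nat_add_iff 1).2 h)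
    have : (1 : ℝ) ≤ ((n + 1 : ℕ) : ℝ) := by exact_mod_cast Nat.one_le_iff_ne_zero.2 (Nat.succ_ne_zero n)
    exact le_mul_of_one_le_left (hg _) this
  exact (summable_nat_add_iff 1).1 h1

lemma tail_summable (g : ℕ → ℝ) (hg : ∀ n, 0 ≤ g n)
    (h : Summable fun n : ℕ => (n : ℝ) * g n) :
    Summable (fun j : ℕ => ∑' i : ℕ, g (j + 1 + i)) := by
  classical
  set G : ℕ × ℕ → ℝ := fun p => if p.2 < p.1 then g p.1 else 0 with hGdef
  have hGnonneg : 0 ≤ G := fun p => by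
    dsimp only [G]; split
    · exact hg _
    · exact le_refl 0
  have hfib : ∀ i : ℕ, Summable fun j => G (i, j) := by
    intro i
    apply summable_of_ne_finset_zero (s := Finset.range i)
    intro j hj
    simp only [Finset.mem_range, not_lt] at hj
    simp only [G]
    rw [if_neg (by omega)]
  have htfib : ∀ i : ℕ, (∑' j : ℕ, G (i, j)) = (i : ℝ) * g i := by
    intro i
    rw [tsum_eq_sum (s := Finset.range i) (fun j hj => by
      simp only [Finset.mem_range, not_lt] at hj
      simp only [G]; rw [if_neg (by omega)])]
    rw [Finset.sum_congr rfl (fun j hj => by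
      simp only [Finset.mem_range] at hj
      simp only [G]; rw [if_pos (by omega)])]
    rw [Finset.sum_const, Finset.card_range, nsmul_eq_mul]
  have hGsum : Summable G := by
    rw [summable_prod_of_nonneg hGnonneg]
    exact ⟨hfib, by simpa only [htfib] using h⟩
  have hGsw : Summable (fun p : ℕ × ℕ => G (p.2, p.1)) := by
    have := (Equiv.prodComm ℕ ℕ).summable_iff (f := G)
    exact this.2 hGsum
  have hpair := (summable_prod_of_nonneg (f := fun p : ℕ × ℕ => G (p.2, p.1))
    (fun p => hGnonneg (p.2, p.1))).1 hGsw
  have key : ∀ j : ℕ, (∑' i : ℕ, G (i, j)) = ∑' i : ℕ, g (j + 1 + i) := by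
    intro j
    have hinj : Function.Injective (fun i : ℕ => j + 1 + i) := fun x y hxy => by
      have hxy' : j + 1 + x = j + 1 + y := hxy
      omega
    have h0 : ∀ x, x ∉ Set.range (fun i : ℕ => j + 1 + i) → G (x, j) = 0 := by
      intro x hx
      have hnx : ¬ j < x := by
        intro hlt
        exact hx ⟨x - (j + 1), by show j + 1 + (x - (j + 1)) = x; omega⟩
      simp only [G]; rw [if_neg hnx]
    have hS : Summable fun i : ℕ => G (i, j) := hpair.1 j
    have h2 : HasSum ((fun i : ℕ => G (i, j)) ∘ fun i => j + 1 + i) (∑' i : ℕ, G (i, j)) :=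
      (hinj.hasSum_iff h0).2 hS.hasSum
    have h3 : ((fun i : ℕ => G (i, j)) ∘ fun i => j + 1 + i) = fun i => g (j + 1 + i) := by
      funext i
      simp only [Function.comp, G]
      rw [if_pos (by omega)]
    rw [h3] at h2
    exact h2.tsum_eq.symm
  exact (summable_congr key).1 hpair.2


set_option maxHeartbeats 1600000 in
/-- **Beveridge–Nelson decomposition.**
For every matrix power series `k(z) = ∑ K j z^j` with real `s×s` matrix coefficients
satisfying `∑ j ‖K j‖ < ∞`, setting `K* j = -∑_{i ≥ j+1} K i` one has:
the coefficients of `k*` are absolutely summable, the coefficients of `k` are absolutely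
summable (so that `k(1) = ∑ K j` converges absolutely), the coefficient identity
`k(z) = k(1) + (1 - z) k*(z)` holds formally (i.e. `K 0 = k(1) + K* 0` and
`K j = K* j - K* (j-1)` for `j ≥ 1`), and the analytic identity holds for all `|z| ≤ 1`. -/
theorem beveridge_nelson (s : ℕ) (K : ℕ → Matrix (Fin s) (Fin s) ℝ)
    (hsum : Summable (fun j : ℕ => (j : ℝ) * opNorm2 (K j))) :
    ∃ Kstar : ℕ → Matrix (Fin s) (Fin s) ℝ,
      (∀ j : ℕ, ∀ a b : Fin s, Kstar j a b = -∑' i : ℕ, K (j + 1 + i) a b) ∧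
      Summable (fun j : ℕ => opNorm2 (K j)) ∧
      Summable (fun j : ℕ => opNorm2 (Kstar j)) ∧
      (∀ a b : Fin s, K 0 a b = (∑' j : ℕ, K j a b) + Kstar 0 a b) ∧
      (∀ j : ℕ, K (j + 1) = Kstar (j + 1) - Kstar j) ∧
      (∀ z : ℝ, |z| ≤ 1 → ∀ a b : Fin s,
        ∑' j : ℕ, K j a b * z ^ j
          = (∑' j : ℕ, K j a b) + (1 - z) * ∑' j : ℕ, Kstar j a b * z ^ j) := by
  classical
  have hK : Summable (fun j => opNorm2 (K j)) :=
    summable_of_mul_nat _ (fun j => norm_nonneg _) hsum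
  have habs : ∀ (a b : Fin s) (j : ℕ), |K j a b| ≤ opNorm2 (K j) :=
    fun a b j => entry_le_opNorm2 _ _ _
  have hfabs : ∀ a b : Fin s, Summable (fun j => |K j a b|) := fun a b =>
    Summable.of_nonneg_of_le (fun j => abs_nonneg _) (fun j => habs a b j) hK
  have hfsum : ∀ a b : Fin s, Summable (fun j => K j a b) := fun a b =>
    summable_abs_iff.1 (hfabs a b)
  have hmulabs : ∀ a b : Fin s, Summable (fun j : ℕ => (j : ℝ) * |K j a b|) := fun a b =>
    Summable.of_nonneg_of_le (fun j => by positivity)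
      (fun j => mul_le_mul_of_nonneg_left (habs a b j) (Nat.cast_nonneg j)) hsum
  have htail : ∀ a b : Fin s, Summable (fun j : ℕ => ∑' i : ℕ, |K (j + 1 + i) a b|) :=
    fun a b => tail_summable _ (fun n => abs_nonneg _) (hmulabs a b)
  have hshiftabs : ∀ (a b : Fin s) (j : ℕ), Summable (fun i : ℕ => |K (j + 1 + i) a b|) := by
    intro a b j
    have h1 := (summable_nat_add_iff (f := fun i => |K i a b|) (j + 1)).2 (hfabs a b)
    refine (summable_congr fun i => ?_).1 h1
    congr 2
    omega
  have hshift : ∀ (a b : Fin s) (j : ℕ), Summable (fun i : ℕ => K (j + 1 + i) a b) :=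
    fun a b j => summable_abs_iff.1 (hshiftabs a b j)
  -- the star coefficients
  set Ks : ℕ → Matrix (Fin s) (Fin s) ℝ :=
    fun j => Matrix.of fun a b => -(∑' i : ℕ, K (j + 1 + i) a b) with hKsdef
  have hKsapp : ∀ (j : ℕ) (a b : Fin s), Ks j a b = -(∑' i : ℕ, K (j + 1 + i) a b) :=
    fun j a b => rfl
  have hKsabs : ∀ (a b : Fin s) (j : ℕ), |Ks j a b| ≤ ∑' i : ℕ, |K (j + 1 + i) a b| := by
    intro a b j
    rw [hKsapp, abs_neg]
    have hnn : Summable fun i : ℕ => ‖K (j + 1 + i) a b‖ := by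
      simpa only [Real.norm_eq_abs] using hshiftabs a b j
    calc |∑' i : ℕ, K (j + 1 + i) a b| ≤ ∑' i : ℕ, ‖K (j + 1 + i) a b‖ :=
          norm_tsum_le_tsum_norm (f := fun i : ℕ => K (j + 1 + i) a b) hnn
      _ = ∑' i : ℕ, |K (j + 1 + i) a b| := by simp only [Real.norm_eq_abs]
  -- coefficient identities
  have hid0 : ∀ a b : Fin s, K 0 a b = (∑' j : ℕ, K j a b) + Ks 0 a b := by
    intro a b
    rw [hKsapp]
    have h1 := Summable.tsum_eq_zero_add (hfsum a b)
    have h2 : (∑' i : ℕ, K (0 + 1 + i) a b) = ∑' i : ℕ, K (i + 1) a b :=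
      tsum_congr fun i => by congr 1; omega
    rw [h1, h2]
    ring
  have hid : ∀ (j : ℕ) (a b : Fin s), K (j + 1) a b = Ks (j + 1) a b - Ks j a b := by
    intro j a b
    rw [hKsapp, hKsapp]
    have h1 := Summable.tsum_eq_zero_add (hshift a b j)
    have h2 : (∑' i : ℕ, K (j + 1 + (i + 1)) a b) = ∑' i : ℕ, K (j + 1 + 1 + i) a b :=
      tsum_congr fun i => by congr 1; omega
    rw [h2] at h1
    rw [h1]
    simp only [add_zero]
    ring
  refine ⟨Ks, hKsapp, hK, ?_, hid0, ?_, ?_⟩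
  · -- summability of opNorm2 (Ks j)
    have hsumm : Summable (fun j : ℕ => ∑ a : Fin s, ∑ b : Fin s, ∑' i : ℕ, |K (j + 1 + i) a b|) :=
      summable_sum fun a _ => summable_sum fun b _ => htail a b
    refine Summable.of_nonneg_of_le (fun j => norm_nonneg _) (fun j => ?_) hsumm
    calc opNorm2 (Ks j) ≤ ∑ a, ∑ b, |Ks j a b| := opNorm2_le_sum _
      _ ≤ ∑ a, ∑ b, ∑' i : ℕ, |K (j + 1 + i) a b| :=
          Finset.sum_le_sum fun a _ => Finset.sum_le_sum fun b _ => hKsabs a b j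
  · -- K (j+1) = Ks (j+1) - Ks j
    intro j
    ext a b
    rw [Matrix.sub_apply]
    exact hid j a b
  · -- analytic identity
    intro z hz a b
    have hzpow : ∀ j : ℕ, |z| ^ j ≤ 1 := fun j => pow_le_one₀ (abs_nonneg z) hz
    have hKsAbs : Summable fun j => |Ks j a b| :=
      Summable.of_nonneg_of_le (fun j => abs_nonneg _) (fun j => hKsabs a b j) (htail a b)
    have hS1 : Summable fun j : ℕ => K j a b * z ^ j := by
      refine summable_abs_iff.1 (Summable.of_nonneg_of_le (fun j => abs_nonneg _)
        (fun j => ?_) (hfabs a b))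
      rw [abs_mul, abs_pow]
      exact mul_le_of_le_one_right (abs_nonneg _) (hzpow j)
    have hS2 : Summable fun j : ℕ => Ks j a b * z ^ j := by
      refine summable_abs_iff.1 (Summable.of_nonneg_of_le (fun j => abs_nonneg _)
        (fun j => ?_) hKsAbs)
      rw [abs_mul, abs_pow]
      exact mul_le_of_le_one_right (abs_nonneg _) (hzpow j)
    have hS3 : Summable fun j : ℕ => Ks j a b * z ^ (j + 1) := by
      have := hS2.mul_right z
      refine (summable_congr fun j => ?_).1 this
      rw [pow_succ]; ring
    have hS4 : Summable fun j : ℕ => Ks (j + 1) a b * z ^ (j + 1) :=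
      (summable_nat_add_iff (f := fun j => Ks j a b * z ^ j) 1).2 hS2
    have e1 : (∑' j : ℕ, K j a b * z ^ j)
        = K 0 a b + ∑' j : ℕ, K (j + 1) a b * z ^ (j + 1) := by
      rw [Summable.tsum_eq_zero_add hS1]
      simp
    have e2 : (∑' j : ℕ, K (j + 1) a b * z ^ (j + 1))
        = (∑' j : ℕ, Ks (j + 1) a b * z ^ (j + 1)) - ∑' j : ℕ, Ks j a b * z ^ (j + 1) := by
      rw [← Summable.tsum_sub hS4 hS3]
      exact tsum_congr fun j => by rw [hid j a b]; ring
    have e3 : (∑' j : ℕ, Ks (j + 1) a b * z ^ (j + 1))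
        = (∑' j : ℕ, Ks j a b * z ^ j) - Ks 0 a b := by
      have h1 := Summable.tsum_eq_zero_add hS2
      rw [pow_zero, mul_one] at h1
      linarith [h1]
    have e4 : (∑' j : ℕ, Ks j a b * z ^ (j + 1)) = (∑' j : ℕ, Ks j a b * z ^ j) * z := by
      rw [← tsum_mul_right]
      exact tsum_congr fun j => by rw [pow_succ]; ring
    have e5 := hid0 a b
    rw [e1, e2, e3, e4, e5]
    ring
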